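/- Let f : ℝ≥0 → ℝ≥0 be a non-decreasing function, integrable with respect to the measure e^{-x} dx on [0,∞), with f(x) → +∞ as x → +∞. Let X be a nonnegative random variable such that P(X > f(x)) ≤ e^{-x} for all x ≥ 0. Then E[X] ≤ ∫₀^∞ f(x) e^{-x} dx. -/

import Mathlib

open MeasureTheory Set

/-- Lemma (prob_to_exp): if `f : ℝ≥0 → ℝ≥0` is nondecreasing, tends to `+∞`, is
integrable against `e^{-x} dx` on `[0,∞)`, and the nonnegative random variable `X`
satisfies the tail bound `P(X > f x) ≤ e^{-x}` for all `x ≥ 0`, then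
`E[X] ≤ ∫₀^∞ f x e^{-x} dx`. -/
theorem stmt_5 {Ω : Type*} [MeasurableSpace Ω] (μ : Measure Ω) [IsProbabilityMeasure μ]
    (X : Ω → ℝ) (hX : Measurable X) (hX0 : ∀ ω, 0 ≤ X ω)
    (f : ℝ → ℝ) (hf0 : ∀ x, 0 ≤ x → 0 ≤ f x)
    (hfmono : ∀ ⦃x y : ℝ⦄, 0 ≤ x → x ≤ y → f x ≤ f y)
    (hftop : Filter.Tendsto f Filter.atTop Filter.atTop)
    (hfint : IntegrableOn (fun x => f x * Real.exp (-x)) (Set.Ici 0))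
    (htail : ∀ x, 0 ≤ x → μ {ω | f x < X ω} ≤ ENNReal.ofReal (Real.exp (-x))) :
    ∫⁻ ω, ENNReal.ofReal (X ω) ∂μ
      ≤ ENNReal.ofReal (∫ x in Set.Ici (0 : ℝ), f x * Real.exp (-x)) := by
  classical
  set g : ℝ → ℝ := fun x => f (max x 0) with hgdef
  have hgmono : Monotone g := fun x y hxy =>
    hfmono (le_max_right x 0) (max_le_max hxy le_rfl)
  have hgmeas : Measurable g := hgmono.measurable
  have hg0 : ∀ x, 0 ≤ g x := fun x => hf0 _ (le_max_right x 0)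
  have hgeq : ∀ x : ℝ, 0 ≤ x → g x = f x := fun x hx => by
    simp [hgdef, max_eq_left hx]
  set ν : Measure ℝ :=
    (volume.restrict (Ici 0)).withDensity (fun x => ENNReal.ofReal (Real.exp (-x))) with hνdef
  have hexpmeas : Measurable fun x : ℝ => ENNReal.ofReal (Real.exp (-x)) :=
    (Real.measurable_exp.comp measurable_neg).ennreal_ofReal
  -- ν of a measurable set
  have hνapp : ∀ s : Set ℝ, MeasurableSet s →
      ν s = ∫⁻ x in s ∩ Ici 0, ENNReal.ofReal (Real.exp (-x)) := by
    intro s hs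
    rw [hνdef, withDensity_apply _ hs, Measure.restrict_restrict hs]
  -- ν (Ioi a) = e^{-a} for a ≥ 0
  have hνIoi : ∀ a : ℝ, 0 ≤ a → ν (Ioi a) = ENNReal.ofReal (Real.exp (-a)) := by
    intro a ha
    have hIoi : Ioi a ∩ Ici 0 = Ioi a := inter_eq_left.2 (fun x hx => le_trans ha (le_of_lt hx))
    have hint : IntegrableOn (fun x => Real.exp (-x)) (Ioi a) := by
      simpa using exp_neg_integrableOn_Ioi a one_pos
    rw [hνapp _ measurableSet_Ioi, hIoi,
      ← ofReal_integral_eq_lintegral_ofReal hint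
        (Filter.Eventually.of_forall fun x => (Real.exp_pos _).le),
      integral_exp_neg_Ioi]
  -- RHS equals lintegral of g against ν
  have hRHS : ENNReal.ofReal (∫ x in Set.Ici (0 : ℝ), f x * Real.exp (-x))
      = ∫⁻ x, ENNReal.ofReal (g x) ∂ν := by
    rw [hνdef, lintegral_withDensity_eq_lintegral_mul _ hexpmeas
      (hgmeas.ennreal_ofReal)]
    have : ∫⁻ x in Ici (0:ℝ), ENNReal.ofReal (Real.exp (-x)) * ENNReal.ofReal (g x)
        = ∫⁻ x in Ici (0:ℝ), ENNReal.ofReal (f x * Real.exp (-x)) := by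
      refine setLIntegral_congr_fun measurableSet_Ici
        (fun x hx => ?_)
      rw [hgeq x hx, ← ENNReal.ofReal_mul (Real.exp_pos _).le, mul_comm]
    simp only [Pi.mul_apply]
    rw [this]
    exact ofReal_integral_eq_lintegral_ofReal hfint
      (ae_restrict_of_ae_restrict_of_subset (subset_refl _)
        ((ae_restrict_iff' measurableSet_Ici).2 (Filter.Eventually.of_forall fun x hx =>
          mul_nonneg (hf0 x hx) (Real.exp_pos _).le)))
  rw [hRHS,
    lintegral_eq_lintegral_meas_lt μ (Filter.Eventually.of_forall hX0) hX.aemeasurable,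
    lintegral_eq_lintegral_meas_lt ν (Filter.Eventually.of_forall hg0) hgmeas.aemeasurable]
  -- pointwise comparison of tails
  refine lintegral_mono_ae ((ae_restrict_iff' measurableSet_Ioi).2
    (Filter.Eventually.of_forall fun t (ht : 0 < t) => ?_))
  set A : Set ℝ := {x | 0 ≤ x ∧ g x ≤ t} with hAdef
  have hgmemset : MeasurableSet {x | t < g x} := measurableSet_lt measurable_const hgmeas
  -- A is bounded above
  have hAbdd : BddAbove A := by
    obtain ⟨b, hb⟩ := Filter.eventually_atTop.1 (hftop.eventually_ge_atTop (t + 1))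
    refine ⟨max b 0, fun x hx => ?_⟩
    by_contra h
    push_neg at h
    have hxb : b ≤ x := le_trans (le_max_left b 0) h.le
    have : t + 1 ≤ g x := by
      rw [hgeq x (le_trans (le_max_right b 0) h.le)]
      exact hb x hxb
    linarith [hx.2]
  by_cases hA : A.Nonempty
  · set a := sSup A with hadef
    have ha0 : 0 ≤ a := by
      obtain ⟨x, hx⟩ := hA
      exact hx.1.trans (le_csSup hAbdd hx)
    -- μ {t < X} ≤ e^{-a}
    have hmu : μ {ω | t < X ω} ≤ ENNReal.ofReal (Real.exp (-a)) := by
      have hfin : μ {ω | t < X ω} ≠ ⊤ := measure_ne_top μ _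
      rw [← ENNReal.ofReal_toReal hfin]
      refine ENNReal.ofReal_le_ofReal ?_
      have hbound : ∀ y < a, (μ {ω | t < X ω}).toReal ≤ Real.exp (-y) := by
        intro y hy
        obtain ⟨x, hxA, hyx⟩ := exists_lt_of_lt_csSup hA hy
        have h1 : μ {ω | t < X ω} ≤ ENNReal.ofReal (Real.exp (-x)) := by
          refine le_trans (measure_mono fun ω hω => ?_) (htail x hxA.1)
          have : f x ≤ t := by rw [← hgeq x hxA.1]; exact hxA.2
          exact lt_of_le_of_lt this hω
        calc (μ {ω | t < X ω}).toReal ≤ Real.exp (-x) := by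
              refine ENNReal.toReal_le_of_le_ofReal (Real.exp_pos _).le h1
          _ ≤ Real.exp (-y) := Real.exp_le_exp.2 (by linarith)
      have hcont : Filter.Tendsto (fun y => Real.exp (-y)) (nhdsWithin a (Iio a))
          (nhds (Real.exp (-a))) :=
        ((Real.continuous_exp.comp continuous_neg).tendsto a).mono_left nhdsWithin_le_nhds
      exact ge_of_tendsto hcont ((eventually_nhdsWithin_of_forall) fun y hy => hbound y hy)
    refine le_trans hmu ?_
    rw [← hνIoi a ha0]
    refine measure_mono fun x hx => ?_
    have hx0 : (0:ℝ) ≤ x := le_trans ha0 (le_of_lt hx)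
    by_contra h
    simp only [mem_setOf_eq, not_lt] at h
    exact absurd (le_csSup hAbdd ⟨hx0, h⟩) (not_le.2 hx)
  · -- A empty: g x > t for all x ≥ 0, so ν {t < g} ≥ ν (Ioi 0) = 1
    have : ENNReal.ofReal (Real.exp (-(0:ℝ))) ≤ ν {x | t < g x} := by
      rw [← hνIoi 0 le_rfl]
      refine measure_mono fun x hx => ?_
      by_contra h
      simp only [mem_setOf_eq, not_lt] at h
      exact hA ⟨x, le_of_lt hx, h⟩
    refine le_trans ?_ this
    simp only [neg_zero, Real.exp_zero, ENNReal.ofReal_one]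
    exact prob_le_one
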